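/- arXiv:1809.04118 — 7 statements merged into one kernel-verified Lean document; each statement's English description precedes it below -/
import Mathlib

section
/- Every σ-centred Boolean algebra carries a strictly positive finitely additive probability measure. -/
open Order

/-- Extend a centred family to a prime ideal disjoint from it. -/
lemma exists_prime_ideal_of_centred {A : Type*} [BooleanAlgebra A] (Eset : Set A)
    (hc : ∀ s : Finset A, ↑s ⊆ Eset → s.inf id ≠ ⊥) :
    ∃ J : Ideal A, J.IsPrime ∧ ∀ a ∈ Eset, a ∉ J := by
  classical
  set Fset : Set A := {a | ∃ s : Finset A, ↑s ⊆ Eset ∧ s.inf id ≤ a} with hFset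
  have hF : IsPFilter Fset := by
    refine IsPFilter.of_def ⟨⊤, ∅, by simp⟩ ?_ ?_
    · rintro x ⟨s, hs, hsx⟩ y ⟨t, ht, hty⟩
      refine ⟨x ⊓ y, ⟨s ∪ t, ?_, ?_⟩, inf_le_left, inf_le_right⟩
      · push_cast; exact Set.union_subset hs ht
      · rw [Finset.inf_union]
        exact inf_le_inf hsx hty
    · rintro x y hxy ⟨s, hs, hsx⟩
      exact ⟨s, hs, hsx.trans hxy⟩
  have hdisj : Disjoint (hF.toPFilter : Set A) ((Ideal.principal (⊥ : A) : Ideal A) : Set A) := by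
    rw [Set.disjoint_left]
    rintro a ⟨s, hs, hsa⟩ ha
    have : a ≤ ⊥ := ha
    exact hc s hs (le_bot_iff.mp (hsa.trans this))
  obtain ⟨J, hJp, _, hJd⟩ := DistribLattice.prime_ideal_of_disjoint_filter_ideal hdisj
  refine ⟨J, hJp, fun a ha haJ => ?_⟩
  have haF : a ∈ (hF.toPFilter : Set A) :=
    ⟨{a}, by simpa using ha, by simp⟩
  exact Set.disjoint_left.mp hJd haF haJ

/-- Every σ-centred Boolean algebra carries a strictly positive finitely additive
probability measure. -/
theorem stmt_0 {A : Type*} [BooleanAlgebra A]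
    (E : ℕ → Set A)
    (hcover : {a : A | a ≠ ⊥} = ⋃ n, E n)
    (hcentred : ∀ n, ∀ s : Finset A, ↑s ⊆ E n → s.inf id ≠ ⊥) :
    ∃ μ : A → ℝ, μ ⊤ = 1 ∧ (∀ a, 0 ≤ μ a) ∧
      (∀ a b : A, a ⊓ b = ⊥ → μ (a ⊔ b) = μ a + μ b) ∧
      ∀ a : A, a ≠ ⊥ → 0 < μ a := by
  classical
  choose J hJp hJE using fun n => exists_prime_ideal_of_centred (E n) (hcentred n)
  -- 0/1 valued measures from prime ideals
  set χ : ℕ → A → ℝ := fun n a => if a ∈ J n then 0 else 1 with hχ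
  have hχ01 : ∀ n a, χ n a = 0 ∨ χ n a = 1 := by
    intro n a; by_cases h : a ∈ J n <;> simp [hχ, h]
  have hχnonneg : ∀ n a, 0 ≤ χ n a := by
    intro n a; rcases hχ01 n a with h | h <;> simp [h]
  have hχle : ∀ n a, χ n a ≤ 1 := by
    intro n a; rcases hχ01 n a with h | h <;> simp [h]
  have hχtop : ∀ n, χ n ⊤ = 1 := by
    intro n
    have : (⊤ : A) ∉ J n := (hJp n).toIsProper.top_notMem
    simp [hχ, this]
  have hχadd : ∀ n (a b : A), a ⊓ b = ⊥ → χ n (a ⊔ b) = χ n a + χ n b := by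
    intro n a b hab
    have hmem : a ∈ J n ∨ b ∈ J n := by
      apply (hJp n).mem_or_mem
      rw [hab]; exact (J n).bot_mem
    by_cases ha : a ∈ J n <;> by_cases hb : b ∈ J n
    · simp [hχ, Ideal.sup_mem ha hb, ha, hb]
    · have : a ⊔ b ∉ J n := fun h => hb ((J n).lower le_sup_right h)
      simp [hχ, this, ha, hb]
    · have : a ⊔ b ∉ J n := fun h => ha ((J n).lower le_sup_left h)
      simp [hχ, this, ha, hb]
    · exact absurd hmem (by simp [ha, hb])
  -- weights
  set w : ℕ → ℝ := fun n => (2 : ℝ)⁻¹ ^ (n + 1) with hw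
  have hwpos : ∀ n, 0 < w n := fun n => by positivity
  have hwsummable : Summable w := by
    simpa [hw, pow_succ, mul_comm] using
      ((summable_geometric_of_lt_one (by norm_num) (by norm_num : (2:ℝ)⁻¹ < 1)).mul_right (2:ℝ)⁻¹)
  have hwsum : ∑' n, w n = 1 := by
    have hg : ∑' n : ℕ, ((2:ℝ)⁻¹) ^ n = 2 := by
      rw [tsum_geometric_of_lt_one (by norm_num) (by norm_num)]
      norm_num
    calc ∑' n, w n = ∑' n, (2:ℝ)⁻¹ * ((2:ℝ)⁻¹ ^ n) := by
          simp [hw, pow_succ, mul_comm]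
      _ = (2:ℝ)⁻¹ * ∑' n, ((2:ℝ)⁻¹ ^ n) := tsum_mul_left
      _ = 1 := by rw [hg]; norm_num
  have hsummable : ∀ a : A, Summable (fun n => w n * χ n a) := by
    intro a
    refine Summable.of_nonneg_of_le (fun n => ?_) (fun n => ?_) hwsummable
    · exact mul_nonneg (hwpos n).le (hχnonneg n a)
    · calc w n * χ n a ≤ w n * 1 :=
            mul_le_mul_of_nonneg_left (hχle n a) (hwpos n).le
        _ = w n := mul_one _
  refine ⟨fun a => ∑' n, w n * χ n a, ?_, ?_, ?_, ?_⟩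
  · simpa [hχtop] using hwsum
  · intro a
    exact tsum_nonneg fun n => mul_nonneg (hwpos n).le (hχnonneg n a)
  · intro a b hab
    have : (fun n => w n * χ n (a ⊔ b)) = fun n => w n * χ n a + w n * χ n b := by
      funext n; rw [hχadd n a b hab]; ring
    dsimp only
    rw [this, Summable.tsum_add (hsummable a) (hsummable b)]
  · intro a ha
    have : a ∈ ⋃ n, E n := by rw [← hcover]; exact ha
    obtain ⟨n, hn⟩ := Set.mem_iUnion.mp this
    have hχa : χ n a = 1 := by simp [hχ, hJE n a hn]
    have hterm : 0 < w n * χ n a := by rw [hχa, mul_one]; exact hwpos n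
    calc (0:ℝ) < w n * χ n a := hterm
      _ ≤ ∑' m, w m * χ m a :=
          Summable.le_tsum (hsummable a) n fun m _ => mul_nonneg (hwpos m).le (hχnonneg m a)
end

section
/- Every countable Boolean algebra carries a strictly positive finitely additive probability measure. -/
open Order

/-- Every countable (nontrivial) Boolean algebra carries a strictly positive
finitely additive probability measure. -/
theorem stmt_1 {A : Type*} [BooleanAlgebra A] [Nontrivial A] [Countable A] :
    ∃ μ : A → ℝ, μ ⊤ = 1 ∧ (∀ a, 0 ≤ μ a) ∧
      (∀ a b : A, a ⊓ b = ⊥ → μ (a ⊔ b) = μ a + μ b) ∧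
      ∀ a : A, a ≠ ⊥ → 0 < μ a := by
  classical
  -- choose an injection into ℕ for weights
  obtain ⟨e, he⟩ := Countable.exists_injective_nat A
  set w : A → ℝ := fun b => (2 : ℝ)⁻¹ ^ (e b) with hw
  have hwpos : ∀ b, 0 < w b := fun b => pow_pos (by norm_num) _
  have hwsum : Summable w := by
    have : Summable (fun n : ℕ => (2 : ℝ)⁻¹ ^ n) :=
      summable_geometric_of_lt_one (by norm_num) (by norm_num)
    exact this.comp_injective he
  -- choose prime ideals
  have hJ : ∀ b : A, b ≠ ⊥ → ∃ J : Order.Ideal A, Order.Ideal.IsPrime J ∧ b ∉ J := by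
    intro b hb
    have hdisj : Disjoint ((PFilter.principal b : PFilter A) : Set A)
        ((Order.Ideal.principal (⊥ : A) : Ideal A) : Set A) := by
      rw [Set.disjoint_left]
      intro x hx hx'
      have h1 : b ≤ x := hx
      have h2 : x ≤ ⊥ := hx'
      exact hb (le_bot_iff.mp (h1.trans h2))
    obtain ⟨J, hJp, _, hJd⟩ := DistribLattice.prime_ideal_of_disjoint_filter_ideal hdisj
    refine ⟨J, hJp, ?_⟩
    exact Set.disjoint_left.mp hJd (le_refl b : b ∈ PFilter.principal b)
  choose J hJprime hJnot using hJ
  -- the indicator function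
  set ind : A → A → ℝ := fun b a =>
    if h : b ≠ ⊥ then (if a ∉ J b h then w b else 0) else 0 with hind
  have hind_nonneg : ∀ b a, 0 ≤ ind b a := by
    intro b a
    simp only [hind]
    split <;> [skip; rfl]
    split <;> [exact (hwpos b).le; rfl]
  have hind_le : ∀ b a, ind b a ≤ w b := by
    intro b a
    simp only [hind]
    split <;> [skip; exact (hwpos b).le]
    split <;> [exact le_refl _; exact (hwpos b).le]
  have hsum : ∀ a, Summable (fun b => ind b a) := fun a =>
    hwsum.of_nonneg_of_le (fun b => hind_nonneg b a) (fun b => hind_le b a)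
  set ν : A → ℝ := fun a => ∑' b, ind b a with hν
  have hν_nonneg : ∀ a, 0 ≤ ν a := fun a => tsum_nonneg (fun b => hind_nonneg b a)
  -- ν ⊤ positive
  have hνtop : 0 < ν ⊤ := by
    have hne : (⊤ : A) ≠ ⊥ := fun h => bot_ne_top h.symm
    have h1 : ind ⊤ ⊤ ≤ ν ⊤ := Summable.le_tsum (hsum ⊤) ⊤ (fun b _ => hind_nonneg b ⊤)
    have h2 : 0 < ind ⊤ ⊤ := by
      simp only [hind, dif_pos hne]
      rw [if_pos ((hJprime ⊤ hne).toIsProper.top_notMem)]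
      exact hwpos ⊤
    linarith
  -- additivity of ν
  have hνadd : ∀ a c : A, a ⊓ c = ⊥ → ν (a ⊔ c) = ν a + ν c := by
    intro a c hac
    show (∑' b, ind b (a ⊔ c)) = (∑' b, ind b a) + (∑' b, ind b c)
    rw [← Summable.tsum_add (hsum a) (hsum c)]
    refine tsum_congr fun b => ?_
    simp only [hind]
    by_cases hb : b ≠ ⊥
    · rw [dif_pos hb, dif_pos hb, dif_pos hb]
      have hbot : (⊥ : A) ∈ J b hb := by
        have := (J b hb).3  -- nonempty? use bot_mem
        exact (J b hb).bot_mem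
      have hmem : a ∈ J b hb ∨ c ∈ J b hb := by
        apply (hJprime b hb).mem_or_mem
        rw [hac]; exact hbot
      have hsupmem : a ⊔ c ∈ J b hb ↔ a ∈ J b hb ∧ c ∈ J b hb := by
        constructor
        · intro h
          exact ⟨(J b hb).lower le_sup_left h, (J b hb).lower le_sup_right h⟩
        · intro ⟨h1, h2⟩
          exact (J b hb).sup_mem h1 h2
      rcases hmem with hm | hm
      · rcases Classical.em (c ∈ J b hb) with hc | hc
        · rw [if_neg (by simp [hsupmem, hm, hc]), if_neg (by simp [hm]),
            if_neg (by simp [hc])]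
          ring
        · rw [if_pos (by simp [hsupmem, hm, hc]), if_neg (by simp [hm]), if_pos hc]
          ring
      · rcases Classical.em (a ∈ J b hb) with ha | ha
        · rw [if_neg (by simp [hsupmem, hm, ha]), if_neg (by simp [ha]),
            if_neg (by simp [hm])]
          ring
        · rw [if_pos (by simp [hsupmem, hm, ha]), if_pos ha, if_neg (by simp [hm])]
          ring
    · rw [dif_neg hb, dif_neg hb, dif_neg hb]; ring
  -- strict positivity of ν
  have hνpos : ∀ a : A, a ≠ ⊥ → 0 < ν a := by
    intro a ha
    have h1 : ind a a ≤ ν a := Summable.le_tsum (hsum a) a (fun b _ => hind_nonneg b a)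
    have h2 : 0 < ind a a := by
      simp only [hind, dif_pos ha]
      rw [if_pos (hJnot a ha)]
      exact hwpos a
    linarith
  -- normalize
  refine ⟨fun a => ν a / ν ⊤, by field_simp, fun a => div_nonneg (hν_nonneg a) hνtop.le,
    fun a c h => ?_, fun a ha => div_pos (hνpos a ha) hνtop⟩
  show ν (a ⊔ c) / ν ⊤ = ν a / ν ⊤ + ν c / ν ⊤
  rw [hνadd a c h]; ring
end

section
/- (Łoś–Marczewski extension) Let μ be a finitely additive probability measure on an algebra 𝔄 of subsets of X and let Z ⊆ X. Define on the algebra 𝔄(Z) generated by 𝔄 ∪ {Z} the function μ̄((A ∩ Z) ∪ (B ∩ Zᶜ)) = μ*(A ∩ Z) + μ₊(B ∩ Zᶜ), where μ*(E) = inf{μ(A) : A ∈ 𝔄, A ⊇ E} and μ₊(E) = sup{μ(A) : A ∈ 𝔄, A ⊆ E}. Then μ̄ is a well-defined finitely additive probability measure on 𝔄(Z) extending μ. -/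
open Set

/-- `𝔄` is an algebra of subsets of `X`. -/
def IsAlg {X : Type*} (𝔄 : Set (Set X)) : Prop :=
  ∅ ∈ 𝔄 ∧ (∀ A ∈ 𝔄, Aᶜ ∈ 𝔄) ∧ ∀ A ∈ 𝔄, ∀ B ∈ 𝔄, A ∪ B ∈ 𝔄

/-- `μ` is a finitely additive probability measure on the algebra `𝔄`. -/
def IsFAProb {X : Type*} (𝔄 : Set (Set X)) (μ : Set X → ℝ) : Prop :=
  μ univ = 1 ∧ (∀ A ∈ 𝔄, 0 ≤ μ A) ∧
    ∀ A ∈ 𝔄, ∀ B ∈ 𝔄, Disjoint A B → μ (A ∪ B) = μ A + μ B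

/-- The outer measure `μ*` induced by `μ` on `𝔄`. -/
noncomputable def outerM {X : Type*} (𝔄 : Set (Set X)) (μ : Set X → ℝ) (E : Set X) : ℝ :=
  sInf (μ '' {A | A ∈ 𝔄 ∧ E ⊆ A})

/-- The inner measure `μ₊` induced by `μ` on `𝔄`. -/
noncomputable def innerM {X : Type*} (𝔄 : Set (Set X)) (μ : Set X → ℝ) (E : Set X) : ℝ :=
  sSup (μ '' {A | A ∈ 𝔄 ∧ A ⊆ E})

/-- The algebra of sets generated by the family `S`. -/
inductive GenAlg {X : Type*} (S : Set (Set X)) : Set X → Prop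
  | basic : ∀ A ∈ S, GenAlg S A
  | empty : GenAlg S ∅
  | compl : ∀ A, GenAlg S A → GenAlg S Aᶜ
  | union : ∀ A B, GenAlg S A → GenAlg S B → GenAlg S (A ∪ B)

/-! The extension is `ν E = μ*(E ∩ Z) + μ₊(E ∩ Zᶜ)`. For `A ∈ 𝔄` and `E ⊆ A` one has
`μ₊(A \ E) = μ A - μ* E`, so `ν` extends `μ`. Both `μ*` and `μ₊` are additive on two sets
separated by a member `A` of `𝔄` (one inside `A`, the other inside `Aᶜ`). Every set of `𝔄(Z)` is
`Z.ite A B` with `A, B ∈ 𝔄`; if `F` is disjoint from it, then `A` separates the traces on `Z` and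
`B` the traces on `Zᶜ`, which gives the finite additivity of `ν`. -/

open MeasureTheory

section

variable {X : Type*} {𝔄 : Set (Set X)} {μ : Set X → ℝ} {A B C E E' Z F : Set X}

theorem IsAlg.isSetAlgebra (h𝔄 : IsAlg 𝔄) : IsSetAlgebra 𝔄 where
  empty_mem := h𝔄.1
  compl_mem := h𝔄.2.1
  union_mem := fun _ _ hA hB => h𝔄.2.2 _ hA _ hB

namespace IsFAProb

theorem measure_univ (hμ : IsFAProb 𝔄 μ) : μ univ = 1 := hμ.1

theorem nonneg (hμ : IsFAProb 𝔄 μ) (hA : A ∈ 𝔄) : 0 ≤ μ A := hμ.2.1 A hA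

theorem measure_union (hμ : IsFAProb 𝔄 μ) (hA : A ∈ 𝔄) (hB : B ∈ 𝔄) (h : Disjoint A B) :
    μ (A ∪ B) = μ A + μ B :=
  hμ.2.2 A hA B hB h

theorem measure_empty (hμ : IsFAProb 𝔄 μ) (h𝔄 : IsSetAlgebra 𝔄) : μ ∅ = 0 := by
  have h := hμ.measure_union h𝔄.empty_mem h𝔄.empty_mem (disjoint_empty ∅)
  rw [union_empty] at h
  linarith

theorem measure_inter_add_sdiff (hμ : IsFAProb 𝔄 μ) (h𝔄 : IsSetAlgebra 𝔄) (hC : C ∈ 𝔄)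
    (hA : A ∈ 𝔄) : μ (C ∩ A) + μ (C \ A) = μ C := by
  rw [← hμ.measure_union (h𝔄.inter_mem hC hA) (h𝔄.sdiff_mem hC hA) disjoint_sdiff_inter.symm,
    inter_union_sdiff]

theorem mono (hμ : IsFAProb 𝔄 μ) (h𝔄 : IsSetAlgebra 𝔄) (hA : A ∈ 𝔄) (hB : B ∈ 𝔄)
    (hAB : A ⊆ B) : μ A ≤ μ B := by
  have h := hμ.measure_inter_add_sdiff h𝔄 hB hA
  rw [inter_eq_right.mpr hAB] at h
  linarith [hμ.nonneg (h𝔄.sdiff_mem hB hA)]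

theorem le_one (hμ : IsFAProb 𝔄 μ) (h𝔄 : IsSetAlgebra 𝔄) (hA : A ∈ 𝔄) : μ A ≤ 1 :=
  hμ.measure_univ ▸ hμ.mono h𝔄 hA h𝔄.univ_mem (subset_univ A)

theorem measure_union_le (hμ : IsFAProb 𝔄 μ) (h𝔄 : IsSetAlgebra 𝔄) (hA : A ∈ 𝔄)
    (hB : B ∈ 𝔄) : μ (A ∪ B) ≤ μ A + μ B := by
  rw [← union_sdiff_self, hμ.measure_union hA (h𝔄.sdiff_mem hB hA) disjoint_sdiff_right]
  linarith [hμ.mono h𝔄 (h𝔄.sdiff_mem hB hA) hB sdiff_subset]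

end IsFAProb

theorem le_outerM_iff (hμ : IsFAProb 𝔄 μ) (h𝔄 : IsSetAlgebra 𝔄) {c : ℝ} :
    c ≤ outerM 𝔄 μ E ↔ ∀ A ∈ 𝔄, E ⊆ A → c ≤ μ A := by
  have hbdd : BddBelow (μ '' {A | A ∈ 𝔄 ∧ E ⊆ A}) := ⟨0, by
    rintro _ ⟨A, hA, rfl⟩
    exact hμ.nonneg hA.1⟩
  rw [outerM, le_csInf_iff hbdd ⟨μ univ, univ, ⟨h𝔄.univ_mem, subset_univ E⟩, rfl⟩]
  simp only [forall_mem_image, mem_ofPred_eq, and_imp]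

theorem innerM_le_iff (hμ : IsFAProb 𝔄 μ) (h𝔄 : IsSetAlgebra 𝔄) {c : ℝ} :
    innerM 𝔄 μ E ≤ c ↔ ∀ A ∈ 𝔄, A ⊆ E → μ A ≤ c := by
  have hbdd : BddAbove (μ '' {A | A ∈ 𝔄 ∧ A ⊆ E}) := ⟨1, by
    rintro _ ⟨A, hA, rfl⟩
    exact hμ.le_one h𝔄 hA.1⟩
  rw [innerM, csSup_le_iff hbdd ⟨μ ∅, ∅, ⟨h𝔄.empty_mem, empty_subset E⟩, rfl⟩]
  simp only [forall_mem_image, mem_ofPred_eq, and_imp]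

theorem outerM_le (hμ : IsFAProb 𝔄 μ) (h𝔄 : IsSetAlgebra 𝔄) (hA : A ∈ 𝔄) (hEA : E ⊆ A) :
    outerM 𝔄 μ E ≤ μ A :=
  (le_outerM_iff hμ h𝔄).mp le_rfl A hA hEA

theorem le_innerM (hμ : IsFAProb 𝔄 μ) (h𝔄 : IsSetAlgebra 𝔄) (hA : A ∈ 𝔄) (hAE : A ⊆ E) :
    μ A ≤ innerM 𝔄 μ E :=
  (innerM_le_iff hμ h𝔄).mp le_rfl A hA hAE

theorem outerM_nonneg (hμ : IsFAProb 𝔄 μ) (h𝔄 : IsSetAlgebra 𝔄) : 0 ≤ outerM 𝔄 μ E :=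
  (le_outerM_iff hμ h𝔄).mpr fun _ hA _ => hμ.nonneg hA

theorem innerM_nonneg (hμ : IsFAProb 𝔄 μ) (h𝔄 : IsSetAlgebra 𝔄) : 0 ≤ innerM 𝔄 μ E :=
  hμ.measure_empty h𝔄 ▸ le_innerM hμ h𝔄 h𝔄.empty_mem (empty_subset E)

theorem innerM_sdiff (hμ : IsFAProb 𝔄 μ) (h𝔄 : IsSetAlgebra 𝔄) (hA : A ∈ 𝔄) (hEA : E ⊆ A) :
    innerM 𝔄 μ (A \ E) = μ A - outerM 𝔄 μ E := by
  apply le_antisymm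
  · refine (innerM_le_iff hμ h𝔄).mpr fun D hD hDE => ?_
    have hD' : A ∩ D = D := inter_eq_right.mpr (hDE.trans sdiff_subset)
    have hsplit := hμ.measure_inter_add_sdiff h𝔄 hA hD
    have hout : outerM 𝔄 μ E ≤ μ (A \ D) :=
      outerM_le hμ h𝔄 (h𝔄.sdiff_mem hA hD) fun x hx => ⟨hEA hx, fun hxD => (hDE hxD).2 hx⟩
    rw [hD'] at hsplit
    linarith
  · suffices μ A - innerM 𝔄 μ (A \ E) ≤ outerM 𝔄 μ E by linarith
    refine (le_outerM_iff hμ h𝔄).mpr fun C hC hEC => ?_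
    have hsplit := hμ.measure_inter_add_sdiff h𝔄 hA hC
    have hin : μ (A \ C) ≤ innerM 𝔄 μ (A \ E) :=
      le_innerM hμ h𝔄 (h𝔄.sdiff_mem hA hC) (sdiff_subset_sdiff_right hEC)
    linarith [hμ.mono h𝔄 (h𝔄.inter_mem hA hC) hC inter_subset_right]

theorem outerM_union_of_subset_compl (hμ : IsFAProb 𝔄 μ) (h𝔄 : IsSetAlgebra 𝔄) (hA : A ∈ 𝔄)
    (hE : E ⊆ A) (hE' : E' ⊆ Aᶜ) :
    outerM 𝔄 μ (E ∪ E') = outerM 𝔄 μ E + outerM 𝔄 μ E' := by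
  apply le_antisymm
  · suffices outerM 𝔄 μ (E ∪ E') - outerM 𝔄 μ E' ≤ outerM 𝔄 μ E by linarith
    refine (le_outerM_iff hμ h𝔄).mpr fun C hC hEC => ?_
    suffices outerM 𝔄 μ (E ∪ E') - μ C ≤ outerM 𝔄 μ E' by linarith
    refine (le_outerM_iff hμ h𝔄).mpr fun C' hC' hEC' => ?_
    have := outerM_le hμ h𝔄 (h𝔄.union_mem hC hC') (union_subset_union hEC hEC')
    linarith [hμ.measure_union_le h𝔄 hC hC']
  · refine (le_outerM_iff hμ h𝔄).mpr fun C hC hEC => ?_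
    have h₁ := outerM_le hμ h𝔄 (h𝔄.inter_mem hC hA)
      (subset_inter (subset_union_left.trans hEC) hE)
    have h₂ := outerM_le hμ h𝔄 (h𝔄.sdiff_mem hC hA)
      (subset_sdiff.mpr ⟨subset_union_right.trans hEC, subset_compl_iff_disjoint_right.mp hE'⟩)
    linarith [hμ.measure_inter_add_sdiff h𝔄 hC hA]

theorem innerM_union_of_subset_compl (hμ : IsFAProb 𝔄 μ) (h𝔄 : IsSetAlgebra 𝔄) (hA : A ∈ 𝔄)
    (hE : E ⊆ A) (hE' : E' ⊆ Aᶜ) :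
    innerM 𝔄 μ (E ∪ E') = innerM 𝔄 μ E + innerM 𝔄 μ E' := by
  apply le_antisymm
  · refine (innerM_le_iff hμ h𝔄).mpr fun D hD hDE => ?_
    have h₁ := le_innerM hμ h𝔄 (h𝔄.inter_mem hD hA) (E := E) fun x ⟨hxD, hxA⟩ =>
      (hDE hxD).resolve_right fun hxE' => hE' hxE' hxA
    have h₂ := le_innerM hμ h𝔄 (h𝔄.sdiff_mem hD hA) (E := E') fun x ⟨hxD, hxA⟩ =>
      (hDE hxD).resolve_left fun hxE => hxA (hE hxE)
    linarith [hμ.measure_inter_add_sdiff h𝔄 hD hA]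
  · suffices innerM 𝔄 μ E ≤ innerM 𝔄 μ (E ∪ E') - innerM 𝔄 μ E' by linarith
    refine (innerM_le_iff hμ h𝔄).mpr fun D hD hDE => ?_
    suffices innerM 𝔄 μ E' ≤ innerM 𝔄 μ (E ∪ E') - μ D by linarith
    refine (innerM_le_iff hμ h𝔄).mpr fun D' hD' hDE' => ?_
    have hdisj : Disjoint D D' :=
      (disjoint_compl_right_iff_subset.mpr (hDE.trans hE)).mono_right (hDE'.trans hE')
    have := le_innerM hμ h𝔄 (h𝔄.union_mem hD hD') (union_subset_union hDE hDE')
    linarith [hμ.measure_union hD hD' hdisj]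

theorem GenAlg.exists_eq_ite (h𝔄 : IsSetAlgebra 𝔄) (hE : GenAlg (𝔄 ∪ {Z}) E) :
    ∃ A ∈ 𝔄, ∃ B ∈ 𝔄, E = Z.ite A B := by
  induction hE with
  | basic A hA =>
    rcases hA with hA | rfl
    · exact ⟨A, hA, A, hA, (ite_same _ _).symm⟩
    · exact ⟨univ, h𝔄.univ_mem, ∅, h𝔄.empty_mem, by simp⟩
  | empty => exact ⟨∅, h𝔄.empty_mem, ∅, h𝔄.empty_mem, (ite_same _ _).symm⟩
  | compl _ _ ih =>
    obtain ⟨A, hA, B, hB, rfl⟩ := ih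
    refine ⟨Aᶜ, h𝔄.compl_mem hA, Bᶜ, h𝔄.compl_mem hB, ?_⟩
    ext x
    by_cases hx : x ∈ Z <;> simp [Set.ite, hx]
  | union _ _ _ _ ih ih' =>
    obtain ⟨A, hA, B, hB, rfl⟩ := ih
    obtain ⟨A', hA', B', hB', rfl⟩ := ih'
    refine ⟨A ∪ A', h𝔄.union_mem hA hA', B ∪ B', h𝔄.union_mem hB hB', ?_⟩
    ext x
    by_cases hx : x ∈ Z <;> simp [Set.ite, hx]

noncomputable def losMarczewski (𝔄 : Set (Set X)) (μ : Set X → ℝ) (Z E : Set X) : ℝ :=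
  outerM 𝔄 μ (E ∩ Z) + innerM 𝔄 μ (E ∩ Zᶜ)

theorem losMarczewski_ite (Z A B : Set X) :
    losMarczewski 𝔄 μ Z (Z.ite A B) = outerM 𝔄 μ (A ∩ Z) + innerM 𝔄 μ (B ∩ Zᶜ) := by
  rw [losMarczewski, ite_inter_self, ite_inter_compl_self]

theorem losMarczewski_of_mem (hμ : IsFAProb 𝔄 μ) (h𝔄 : IsSetAlgebra 𝔄) (hA : A ∈ 𝔄) :
    losMarczewski 𝔄 μ Z A = μ A := by
  rw [losMarczewski, ← sdiff_eq, ← sdiff_self_inter, innerM_sdiff hμ h𝔄 hA inter_subset_left]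
  ring

theorem losMarczewski_nonneg (hμ : IsFAProb 𝔄 μ) (h𝔄 : IsSetAlgebra 𝔄) :
    0 ≤ losMarczewski 𝔄 μ Z E :=
  add_nonneg (outerM_nonneg hμ h𝔄) (innerM_nonneg hμ h𝔄)

theorem losMarczewski_ite_union (hμ : IsFAProb 𝔄 μ) (h𝔄 : IsSetAlgebra 𝔄) (hA : A ∈ 𝔄)
    (hB : B ∈ 𝔄) (h : Disjoint (Z.ite A B) F) :
    losMarczewski 𝔄 μ Z (Z.ite A B ∪ F) =
      losMarczewski 𝔄 μ Z (Z.ite A B) + losMarczewski 𝔄 μ Z F := by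
  have hFA : F ∩ Z ⊆ Aᶜ := fun x ⟨hxF, hxZ⟩ hxA =>
    disjoint_left.mp h (Or.inl ⟨hxA, hxZ⟩) hxF
  have hFB : F ∩ Zᶜ ⊆ Bᶜ := fun x ⟨hxF, hxZ⟩ hxB =>
    disjoint_left.mp h (Or.inr ⟨hxB, hxZ⟩) hxF
  simp only [losMarczewski, union_inter_distrib_right, ite_inter_self, ite_inter_compl_self]
  rw [outerM_union_of_subset_compl hμ h𝔄 hA inter_subset_left hFA,
    innerM_union_of_subset_compl hμ h𝔄 hB inter_subset_left hFB]
  ring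

theorem isFAProb_losMarczewski (hμ : IsFAProb 𝔄 μ) (h𝔄 : IsSetAlgebra 𝔄) (Z : Set X) :
    IsFAProb {C | GenAlg (𝔄 ∪ {Z}) C} (losMarczewski 𝔄 μ Z) := by
  refine ⟨?_, fun _ _ => losMarczewski_nonneg hμ h𝔄, fun E hE F _ hEF => ?_⟩
  · rw [losMarczewski_of_mem hμ h𝔄 h𝔄.univ_mem, hμ.measure_univ]
  · obtain ⟨A, hA, B, hB, rfl⟩ := GenAlg.exists_eq_ite h𝔄 hE
    exact losMarczewski_ite_union hμ h𝔄 hA hB hEF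

end

/-- (Łoś–Marczewski) The formula
`μ̄((A ∩ Z) ∪ (B ∩ Zᶜ)) = μ*(A ∩ Z) + μ₊(B ∩ Zᶜ)` gives a well-defined finitely
additive probability measure on `𝔄(Z)` extending `μ`. -/
theorem stmt_2 {X : Type*} (𝔄 : Set (Set X)) (h𝔄 : IsAlg 𝔄)
    (μ : Set X → ℝ) (hμ : IsFAProb 𝔄 μ) (Z : Set X) :
    ∃ ν : Set X → ℝ,
      (∀ A ∈ 𝔄, ν A = μ A) ∧
      IsFAProb {C | GenAlg (𝔄 ∪ {Z}) C} ν ∧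
      ∀ A ∈ 𝔄, ∀ B ∈ 𝔄,
        ν ((A ∩ Z) ∪ (B ∩ Zᶜ)) = outerM 𝔄 μ (A ∩ Z) + innerM 𝔄 μ (B ∩ Zᶜ) := by
  have h𝔄 := h𝔄.isSetAlgebra
  exact ⟨losMarczewski 𝔄 μ Z, fun A hA => losMarczewski_of_mem hμ h𝔄 hA,
    isFAProb_losMarczewski hμ h𝔄 Z, fun A _ B _ => losMarczewski_ite Z A B⟩
end

section
/- Let I ⊆ κ, let 𝔄 be an algebra of subsets of 2^κ whose members are all determined by coordinates in I, and let Z ⊆ 2^κ be a nonempty proper subset determined by coordinates in κ \ I. If μ is a strictly positive finitely additive probability measure on 𝔄, then μ*(A ∩ Z) = μ(A) for every A ∈ 𝔄, where μ* denotes the outer measure induced by μ. -/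
open Set

/-- `μ` is strictly positive on `𝔄`. -/
def StrictlyPos {X : Type*} (𝔄 : Set (Set X)) (μ : Set X → ℝ) : Prop :=
  ∀ A ∈ 𝔄, A.Nonempty → 0 < μ A

/-- A set `A ⊆ 2^κ` is determined by coordinates in `I`. -/
def DetBy {κ : Type*} (I : Set κ) (A : Set (κ → Bool)) : Prop :=
  ∀ x ∈ A, ∀ y : κ → Bool, (∀ i ∈ I, y i = x i) → y ∈ A

/-- For an algebra of sets determined by coordinates in `I`, a nonempty proper `Z`
determined by coordinates in `κ \ I`, and a strictly positive finitely additive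
probability measure `μ` on `𝔄`, one has `μ*(A ∩ Z) = μ(A)` for every `A ∈ 𝔄`. -/
theorem stmt_6 {κ : Type*} (I : Set κ) (𝔄 : Set (Set (κ → Bool))) (h𝔄 : IsAlg 𝔄)
    (hdet : ∀ A ∈ 𝔄, DetBy I A) (Z : Set (κ → Bool)) (hZ : DetBy Iᶜ Z)
    (hZne : Z.Nonempty) (hZproper : Z ≠ univ)
    (μ : Set (κ → Bool) → ℝ) (hμ : IsFAProb 𝔄 μ) (hsp : StrictlyPos 𝔄 μ) :
    ∀ A ∈ 𝔄, outerM 𝔄 μ (A ∩ Z) = μ A := by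
  obtain ⟨hempty, hcompl, hunion⟩ := h𝔄
  obtain ⟨huniv, hnonneg, hadd⟩ := hμ
  obtain ⟨z, hz⟩ := hZne
  intro A hA
  -- monotonicity of μ on 𝔄
  have hmono : ∀ B ∈ 𝔄, ∀ C ∈ 𝔄, B ⊆ C → μ B ≤ μ C := by
    intro B hB C hC hBC
    have hdiff : C ∩ Bᶜ ∈ 𝔄 := by
      have : (Cᶜ ∪ B)ᶜ ∈ 𝔄 := hcompl _ (hunion _ (hcompl _ hC) _ hB)
      simpa [Set.compl_union] using this
    have hdisj : Disjoint B (C ∩ Bᶜ) :=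
      Set.disjoint_left.mpr (fun x hx hx' => hx'.2 hx)
    have hun : B ∪ (C ∩ Bᶜ) = C := by
      ext x
      constructor
      · rintro (h | h)
        · exact hBC h
        · exact h.1
      · intro h
        by_cases hb : x ∈ B
        · exact Or.inl hb
        · exact Or.inr ⟨h, hb⟩
    have := hadd B hB _ hdiff hdisj
    rw [hun] at this
    linarith [hnonneg _ hdiff]
  -- key: any B ∈ 𝔄 containing A ∩ Z contains A
  have key : ∀ B ∈ 𝔄, A ∩ Z ⊆ B → A ⊆ B := by
    intro B hB hsub x hx
    classical
    set y : κ → Bool := fun i => if i ∈ I then x i else z i with hy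
    have hyA : y ∈ A := hdet A hA x hx y (fun i hi => by simp [hy, hi])
    have hyZ : y ∈ Z := hZ z hz y (fun i hi => by simp only [hy]; rw [if_neg hi])
    have hyB : y ∈ B := hsub ⟨hyA, hyZ⟩
    exact hdet B hB y hyB x (fun i hi => by simp [hy, hi])
  have hmem : μ A ∈ μ '' {B | B ∈ 𝔄 ∧ A ∩ Z ⊆ B} :=
    ⟨A, ⟨hA, Set.inter_subset_left⟩, rfl⟩
  have hlb : ∀ r ∈ μ '' {B | B ∈ 𝔄 ∧ A ∩ Z ⊆ B}, μ A ≤ r := by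
    rintro r ⟨B, ⟨hB, hsub⟩, rfl⟩
    exact hmono A hA B hB (key B hB hsub)
  exact le_antisymm (csInf_le ⟨μ A, hlb⟩ hmem) (le_csInf ⟨μ A, hmem⟩ hlb)
end

section
/- Let ⟨I_k : k ∈ ω⟩ be a strictly increasing sequence of subsets of κ, let 𝔄_k be an increasing sequence of algebras of subsets of 2^κ with C[I_k] ⊆ 𝔄_k ⊆ Ba[I_k], and let ν be a finitely additive probability measure on 𝔄 = ⋃_k 𝔄_k. Then there exists a set Z ∈ Ba[⋃_k I_k] such that: (a) for every k, every strictly positive finitely additive probability measure on 𝔄_k extends to a strictly positive finitely additive probability measure on 𝔄_k(Z); and (b) ν does not extend to a strictly positive finitely additive probability measure on 𝔄(Z). -/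
open Set

/-- `C[I]`: the clopen subsets of `2^κ` determined by finitely many coordinates in `I`. -/
def CylAlg {κ : Type*} (I : Set κ) : Set (Set (κ → Bool)) :=
  {A | ∃ F : Finset κ, ↑F ⊆ I ∧ DetBy (↑F : Set κ) A}

/-- `Ba[I]`: the σ-algebra of subsets of `2^κ` generated by `C[I]`. -/
def BaOn {κ : Type*} (I : Set κ) : Set (Set (κ → Bool)) :=
  {A | @MeasurableSet _ (MeasurableSpace.generateFrom (CylAlg I)) A}

lemma detBy_iff {κ : Type*} {J : Set κ} {A : Set (κ → Bool)} (h : DetBy J A)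
    {x y : κ → Bool} (hxy : ∀ i ∈ J, y i = x i) : x ∈ A ↔ y ∈ A :=
  ⟨fun hx => h x hx y hxy, fun hy => h y hy x (fun i hi => (hxy i hi).symm)⟩

lemma baOn_detBy {κ : Type*} (J : Set κ) {A : Set (κ → Bool)} (hA : A ∈ BaOn J) :
    DetBy J A := by
  let m : MeasurableSpace (κ → Bool) :=
    { MeasurableSet' := DetBy J
      measurableSet_empty := fun x hx => hx.elim
      measurableSet_compl := fun A hA x hx y hxy hyA =>
        hx (hA y hyA x fun i hi => (hxy i hi).symm)
      measurableSet_iUnion := fun f hf x hx y hxy => by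
        obtain ⟨n, hn⟩ := mem_iUnion.1 hx
        exact mem_iUnion.2 ⟨n, hf n x hn y hxy⟩ }
  have hle : MeasurableSpace.generateFrom (CylAlg J) ≤ m := by
    refine MeasurableSpace.generateFrom_le ?_
    rintro t ⟨F, hFJ, hdet⟩ x hx y hxy
    exact hdet x hx y fun i hi => hxy i (hFJ hi)
  exact hle A hA

/-- Choice of a bit making the corresponding half of `S` have `ν`-measure `≤ ν S / 2`. -/
noncomputable def chooseBit {κ : Type*} (ν : Set (κ → Bool) → ℝ) (i : κ)
    (S : Set (κ → Bool)) : Bool :=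
  if ν (S ∩ {x | x i = true}) ≤ ν S / 2 then true else false

/-- The decreasing sequence of cylinders. -/
noncomputable def seqA {κ : Type*} (ν : Set (κ → Bool) → ℝ) (idx : ℕ → κ) :
    ℕ → Set (κ → Bool)
  | 0 => univ
  | n + 1 => seqA ν idx n ∩ {x | x (idx n) = chooseBit ν (idx n) (seqA ν idx n)}

noncomputable def bitOf {κ : Type*} (ν : Set (κ → Bool) → ℝ) (idx : ℕ → κ) (n : ℕ) : Bool :=
  chooseBit ν (idx n) (seqA ν idx n)

lemma seqA_eq {κ : Type*} (ν : Set (κ → Bool) → ℝ) (idx : ℕ → κ) (n : ℕ) :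
    seqA ν idx n = {x | ∀ m < n, x (idx m) = bitOf ν idx m} := by
  induction n with
  | zero => simp [seqA]
  | succ n ih =>
    show seqA ν idx n ∩ {x | x (idx n) = bitOf ν idx n} = _
    rw [ih]
    ext x
    simp only [mem_inter_iff, mem_setOf_eq, Nat.lt_succ_iff_lt_or_eq]
    constructor
    · rintro ⟨h1, h2⟩ m (hm | rfl)
      · exact h1 m hm
      · exact h2
    · intro h
      exact ⟨fun m hm => h m (Or.inl hm), h n (Or.inr rfl)⟩

/-- Given a strictly increasing sequence `I_k ⊆ κ`, an increasing sequence of algebras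
`C[I_k] ⊆ 𝔄_k ⊆ Ba[I_k]`, and a finitely additive probability measure `ν` on
`𝔄 = ⋃ₖ 𝔄_k`, there is `Z ∈ Ba[⋃ₖ I_k]` such that (a) every strictly positive
measure on `𝔄_k` extends to a strictly positive one on `𝔄_k(Z)`, while (b) `ν` has
no strictly positive extension to `𝔄(Z)`. -/
theorem stmt_10 {κ : Type*} (I : ℕ → Set κ) (hI : ∀ k, I k ⊂ I (k + 1))
    (𝔄 : ℕ → Set (Set (κ → Bool))) (halg : ∀ k, IsAlg (𝔄 k))
    (hmono : ∀ k, 𝔄 k ⊆ 𝔄 (k + 1))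
    (hlow : ∀ k, CylAlg (I k) ⊆ 𝔄 k) (hup : ∀ k, 𝔄 k ⊆ BaOn (I k))
    (ν : Set (κ → Bool) → ℝ) (hν : IsFAProb (⋃ k, 𝔄 k) ν) :
    ∃ Z ∈ BaOn (⋃ k, I k),
      (∀ k, ∀ μ : Set (κ → Bool) → ℝ, IsFAProb (𝔄 k) μ → StrictlyPos (𝔄 k) μ →
        ∃ μ' : Set (κ → Bool) → ℝ, (∀ A ∈ 𝔄 k, μ' A = μ A) ∧
          IsFAProb {C | GenAlg (𝔄 k ∪ {Z}) C} μ' ∧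
          StrictlyPos {C | GenAlg (𝔄 k ∪ {Z}) C} μ') ∧
      ¬ ∃ ν' : Set (κ → Bool) → ℝ, (∀ A ∈ ⋃ k, 𝔄 k, ν' A = ν A) ∧
          IsFAProb {C | GenAlg ((⋃ k, 𝔄 k) ∪ {Z}) C} ν' ∧
          StrictlyPos {C | GenAlg ((⋃ k, 𝔄 k) ∪ {Z}) C} ν' := by
  classical
  -- choose new coordinates
  have hex : ∀ n, ∃ i, i ∈ I (n + 1) ∧ i ∉ I n := by
    intro n
    obtain ⟨i, hi1, hi2⟩ := exists_of_ssubset (hI n)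
    exact ⟨i, hi1, hi2⟩
  choose idx hidx1 hidx2 using hex
  have hImono : ∀ m n : ℕ, m ≤ n → I m ⊆ I n := by
    intro m n hmn
    induction n, hmn using Nat.le_induction with
    | base => exact fun x hx => hx
    | succ n hmn ih => exact ih.trans (hI n).1
  have hidxI : ∀ m n : ℕ, m < n → idx m ∈ I n := fun m n hmn =>
    hImono (m + 1) n hmn (hidx1 m)
  have hidxnI : ∀ m n : ℕ, n ≤ m → idx m ∉ I n := fun m n hnm h =>
    hidx2 m (hImono n m hnm h)
  have idx_inj : Function.Injective idx := by
    intro m n h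
    by_contra hne
    rcases Nat.lt_or_ge m n with hlt | hge
    · exact hidx2 n (h ▸ hidxI m n hlt)
    · exact hidx2 m (h.symm ▸ hidxI n m (lt_of_le_of_ne hge (Ne.symm hne)))
  set b : ℕ → Bool := bitOf ν idx with hb
  set A : ℕ → Set (κ → Bool) := seqA ν idx with hA
  have hAdesc : ∀ n, A n = {x | ∀ m < n, x (idx m) = b m} := seqA_eq ν idx
  -- A n is a cylinder over I n
  have hAcyl : ∀ n, A n ∈ CylAlg (I n) := by
    intro n
    refine ⟨(Finset.range n).image idx, ?_, ?_⟩
    · intro i hi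
      simp only [Finset.coe_image, Finset.coe_range, mem_image] at hi
      obtain ⟨m, hm, rfl⟩ := hi
      exact hidxI m n (by simpa using hm)
    · rw [hAdesc]
      intro x hx y hxy m hm
      have : y (idx m) = x (idx m) := by
        refine hxy (idx m) ?_
        simp only [Finset.coe_image, Finset.coe_range]
        exact mem_image_of_mem idx (by simpa using hm)
      rw [this]; exact hx m hm
  have hAmem : ∀ n, A n ∈ ⋃ k, 𝔄 k := fun n => mem_iUnion.2 ⟨n, hlow n (hAcyl n)⟩
  -- measure bound
  have hstep : ∀ n, A (n + 1) = A n ∩ {x | x (idx n) = b n} := fun n => rfl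
  have hcylhalf : ∀ n (c : Bool), A n ∩ {x | x (idx n) = c} ∈ ⋃ k, 𝔄 k := by
    intro n c
    refine mem_iUnion.2 ⟨n + 1, hlow (n + 1) ⟨(Finset.range (n + 1)).image idx, ?_, ?_⟩⟩
    · intro i hi
      simp only [Finset.coe_image, Finset.coe_range, mem_image] at hi
      obtain ⟨m, hm, rfl⟩ := hi
      exact hidxI m (n + 1) (by simpa using hm)
    · rw [hAdesc]
      intro x hx y hxy
      have key : ∀ m, m ≤ n → y (idx m) = x (idx m) := by
        intro m hm
        refine hxy (idx m) ?_
        simp only [Finset.coe_image, Finset.coe_range]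
        exact mem_image_of_mem idx (by simpa using Nat.lt_succ_of_le hm)
      constructor
      · intro m hm
        rw [key m (Nat.le_of_lt hm)]; exact hx.1 m hm
      · show y (idx n) = c
        rw [key n le_rfl]; exact hx.2
  have hhalf : ∀ n, ν (A (n + 1)) ≤ ν (A n) / 2 := by
    intro n
    have hpart : A n = (A n ∩ {x | x (idx n) = true}) ∪ (A n ∩ {x | x (idx n) = false}) := by
      ext x
      simp only [mem_union, mem_inter_iff, mem_setOf_eq]
      rcases Bool.eq_false_or_eq_true (x (idx n)) with h | h <;> tauto
    have hdisj : Disjoint (A n ∩ {x | x (idx n) = true}) (A n ∩ {x | x (idx n) = false}) := by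
      rw [disjoint_left]
      rintro x ⟨-, h1⟩ ⟨-, h2⟩
      simp only [mem_setOf_eq] at h1 h2
      rw [h1] at h2; exact Bool.noConfusion h2
    have hadd := hν.2.2 _ (hcylhalf n true) _ (hcylhalf n false) hdisj
    rw [← hpart] at hadd
    have hnn1 := hν.2.1 _ (hcylhalf n true)
    have hnn0 := hν.2.1 _ (hcylhalf n false)
    rw [hstep n]
    by_cases hc : ν (A n ∩ {x | x (idx n) = true}) ≤ ν (A n) / 2
    · have : b n = true := by
        simp only [hb, bitOf, ← hA, chooseBit, if_pos hc]
      rw [this]; exact hc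
    · have : b n = false := by
        simp only [hb, bitOf, ← hA, chooseBit, if_neg hc]
      rw [this]
      push_neg at hc
      linarith
  have hbound : ∀ n, ν (A n) ≤ (1 / 2 : ℝ) ^ n := by
    intro n
    induction n with
    | zero =>
      have : A 0 = univ := rfl
      rw [this, hν.1]; norm_num
    | succ n ih =>
      calc ν (A (n + 1)) ≤ ν (A n) / 2 := hhalf n
        _ ≤ (1 / 2 : ℝ) ^ n / 2 := by linarith
        _ = (1 / 2 : ℝ) ^ (n + 1) := by ring
  -- the set Z and a point in it
  set Z : Set (κ → Bool) := {x | ∀ n, x (idx n) = b n} with hZ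
  set z : κ → Bool := fun i => if h : ∃ n, idx n = i then b h.choose else false with hzdef
  have hzidx : ∀ n, z (idx n) = b n := by
    intro n
    have h : ∃ m, idx m = idx n := ⟨n, rfl⟩
    simp only [hzdef, dif_pos h]
    have := h.choose_spec
    rw [idx_inj this]
  have hzZ : z ∈ Z := fun n => hzidx n
  have hZA : ∀ n, Z ⊆ A n := by
    intro n
    rw [hAdesc]
    exact fun x hx m _ => hx m
  have hZBa : Z ∈ BaOn (⋃ k, I k) := by
    have : Z = ⋂ n, {x : κ → Bool | x (idx n) = b n} := by
      ext x; simp [hZ]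
    rw [this]
    refine MeasurableSet.iInter fun n => MeasurableSpace.measurableSet_generateFrom ?_
    refine ⟨{idx n}, ?_, ?_⟩
    · intro i hi
      simp only [Finset.coe_singleton, mem_singleton_iff] at hi
      subst hi
      exact mem_iUnion.2 ⟨n + 1, hidx1 n⟩
    · intro x hx y hxy
      have : y (idx n) = x (idx n) := hxy (idx n) (by simp)
      simpa [this] using hx
  refine ⟨Z, hZBa, ?_, ?_⟩
  · -- part (a)
    intro k μ hμ hsp
    set T : (κ → Bool) → (κ → Bool) :=
      fun x i => if h : ∃ n, k ≤ n ∧ idx n = i then b h.choose else x i with hT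
    set S : (κ → Bool) → (κ → Bool) :=
      fun x i => if idx k = i then !(b k) else x i with hS
    have hTI : ∀ x, ∀ i ∈ I k, T x i = x i := by
      intro x i hi
      simp only [hT]
      rw [dif_neg]
      rintro ⟨n, hkn, rfl⟩
      exact hidxnI n k hkn hi
    have hSI : ∀ x, ∀ i ∈ I k, S x i = x i := by
      intro x i hi
      simp only [hS]
      rw [if_neg]
      rintro rfl
      exact hidxnI k k le_rfl hi
    have hdet : ∀ B ∈ 𝔄 k, ∀ x : κ → Bool, (T x ∈ B ↔ x ∈ B) ∧ (S x ∈ B ↔ x ∈ B) := by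
      intro B hB x
      have hd := baOn_detBy (I k) (hup k hB)
      exact ⟨(detBy_iff hd (hTI x)).symm, (detBy_iff hd (hSI x)).symm⟩
    have hTidx_ge : ∀ x n, k ≤ n → T x (idx n) = b n := by
      intro x n hkn
      have h : ∃ m, k ≤ m ∧ idx m = idx n := ⟨n, hkn, rfl⟩
      simp only [hT]
      rw [dif_pos h]
      rw [idx_inj h.choose_spec.2]
    have hTidx_lt : ∀ x n, n < k → T x (idx n) = x (idx n) := by
      intro x n hnk
      simp only [hT]
      rw [dif_neg]
      rintro ⟨m, hkm, hm⟩
      have := idx_inj hm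
      omega
    have hTZ : ∀ x, T x ∈ Z ↔ x ∈ A k := by
      intro x
      rw [hAdesc]
      constructor
      · intro h m hm
        have := h m
        rwa [hTidx_lt x m hm] at this
      · intro h n
        rcases Nat.lt_or_ge n k with hn | hn
        · rw [hTidx_lt x n hn]; exact h n hn
        · exact hTidx_ge x n hn
    have hSZ : ∀ x, S x ∉ Z := by
      intro x hx
      have := hx k
      simp only [hS, if_pos rfl] at this
      exact (Bool.not_ne_self (b k)) this
    have hAk : A k ∈ 𝔄 k := hlow k (hAcyl k)
    -- preimages stay in 𝔄 k
    have hpre : ∀ C, GenAlg (𝔄 k ∪ {Z}) C → T ⁻¹' C ∈ 𝔄 k ∧ S ⁻¹' C ∈ 𝔄 k := by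
      intro C hC
      induction hC with
      | basic B hB =>
        rcases hB with hB | hB
        · have h1 : T ⁻¹' B = B := by ext x; exact (hdet B hB x).1
          have h2 : S ⁻¹' B = B := by ext x; exact (hdet B hB x).2
          rw [h1, h2]; exact ⟨hB, hB⟩
        · rw [mem_singleton_iff] at hB
          subst hB
          have h1 : T ⁻¹' Z = A k := by ext x; exact hTZ x
          have h2 : S ⁻¹' Z = ∅ := by
            ext x; simp only [mem_preimage, mem_empty_iff_false, iff_false]; exact hSZ x
          rw [h1, h2]; exact ⟨hAk, (halg k).1⟩
      | empty =>
        rw [preimage_empty]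
        exact ⟨(halg k).1, (halg k).1⟩
      | compl B _ ih =>
        rw [preimage_compl, preimage_compl]
        exact ⟨(halg k).2.1 _ ih.1, (halg k).2.1 _ ih.2⟩
      | union B₁ B₂ _ _ ih1 ih2 =>
        rw [preimage_union, preimage_union]
        exact ⟨(halg k).2.2 _ ih1.1 _ ih2.1, (halg k).2.2 _ ih1.2 _ ih2.2⟩
    -- membership transfer
    have htrans : ∀ C, GenAlg (𝔄 k ∪ {Z}) C → ∀ x : κ → Bool,
        (x ∈ Z → (T x ∈ C ↔ x ∈ C)) ∧ (x ∉ Z → (S x ∈ C ↔ x ∈ C)) := by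
      intro C hC
      induction hC with
      | basic B hB =>
        intro x
        rcases hB with hB | hB
        · exact ⟨fun _ => (hdet B hB x).1, fun _ => (hdet B hB x).2⟩
        · rw [mem_singleton_iff] at hB
          subst hB
          constructor
          · intro hx
            rw [hTZ x]
            exact ⟨fun _ => hx, fun _ => hZA k hx⟩
          · intro hx
            constructor
            · intro h; exact absurd h (hSZ x)
            · intro h; exact absurd h hx
      | empty => intro x; simp
      | compl B _ ih =>
        intro x
        refine ⟨fun hx => ?_, fun hx => ?_⟩
        · simp only [mem_compl_iff]; rw [(ih x).1 hx]
        · simp only [mem_compl_iff]; rw [(ih x).2 hx]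
      | union B₁ B₂ _ _ ih1 ih2 =>
        intro x
        refine ⟨fun hx => ?_, fun hx => ?_⟩
        · simp only [mem_union]; rw [(ih1 x).1 hx, (ih2 x).1 hx]
        · simp only [mem_union]; rw [(ih1 x).2 hx, (ih2 x).2 hx]
    refine ⟨fun C => (μ (T ⁻¹' C) + μ (S ⁻¹' C)) / 2, ?_, ⟨?_, ?_, ?_⟩, ?_⟩
    · -- extends μ
      intro B hB
      have h1 : T ⁻¹' B = B := by ext x; exact (hdet B hB x).1
      have h2 : S ⁻¹' B = B := by ext x; exact (hdet B hB x).2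
      dsimp only
      rw [h1, h2]; ring
    · -- total mass
      dsimp only
      rw [preimage_univ, preimage_univ, hμ.1]; norm_num
    · -- nonneg
      intro B hB
      obtain ⟨h1, h2⟩ := hpre B hB
      have := hμ.2.1 _ h1
      have := hμ.2.1 _ h2
      dsimp only
      linarith
    · -- additivity
      intro B₁ hB1 B₂ hB2 hd
      obtain ⟨h11, h12⟩ := hpre B₁ hB1
      obtain ⟨h21, h22⟩ := hpre B₂ hB2
      have e1 : μ (T ⁻¹' (B₁ ∪ B₂)) = μ (T ⁻¹' B₁) + μ (T ⁻¹' B₂) := by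
        rw [preimage_union]
        exact hμ.2.2 _ h11 _ h21 (hd.preimage T)
      have e2 : μ (S ⁻¹' (B₁ ∪ B₂)) = μ (S ⁻¹' B₁) + μ (S ⁻¹' B₂) := by
        rw [preimage_union]
        exact hμ.2.2 _ h12 _ h22 (hd.preimage S)
      dsimp only
      rw [e1, e2]; ring
    · -- strictly positive
      intro B hB ⟨x, hx⟩
      obtain ⟨h1, h2⟩ := hpre B hB
      have hnn1 := hμ.2.1 _ h1
      have hnn2 := hμ.2.1 _ h2
      by_cases hxZ : x ∈ Z
      · have hTx : T x ∈ B := ((htrans B hB x).1 hxZ).2 hx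
        have : 0 < μ (T ⁻¹' B) := hsp _ h1 ⟨x, hTx⟩
        dsimp only; linarith
      · have hSx : S x ∈ B := ((htrans B hB x).2 hxZ).2 hx
        have : 0 < μ (S ⁻¹' B) := hsp _ h2 ⟨x, hSx⟩
        dsimp only; linarith
  · -- part (b)
    rintro ⟨ν', hext, hprob, hspos⟩
    have hZG : GenAlg ((⋃ k, 𝔄 k) ∪ {Z}) Z := GenAlg.basic Z (Or.inr rfl)
    have hAnG : ∀ n, GenAlg ((⋃ k, 𝔄 k) ∪ {Z}) (A n) :=
      fun n => GenAlg.basic _ (Or.inl (hAmem n))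
    have hdiffG : ∀ n, GenAlg ((⋃ k, 𝔄 k) ∪ {Z}) (A n ∩ Zᶜ) := by
      intro n
      have : A n ∩ Zᶜ = ((A n)ᶜ ∪ Z)ᶜ := by
        rw [compl_union, compl_compl]
      rw [this]
      exact GenAlg.compl _ (GenAlg.union _ _ (GenAlg.compl _ (hAnG n)) hZG)
    have hle : ∀ n, ν' Z ≤ (1 / 2 : ℝ) ^ n := by
      intro n
      have hsplit : A n = Z ∪ (A n ∩ Zᶜ) := by
        ext x
        simp only [mem_union, mem_inter_iff, mem_compl_iff]
        constructor
        · intro hx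
          by_cases hxZ : x ∈ Z
          · exact Or.inl hxZ
          · exact Or.inr ⟨hx, hxZ⟩
        · rintro (hx | ⟨hx, -⟩)
          · exact hZA n hx
          · exact hx
      have hd : Disjoint Z (A n ∩ Zᶜ) := by
        rw [disjoint_left]
        rintro x hx ⟨-, hx2⟩
        exact hx2 hx
      have hadd := hprob.2.2 Z hZG _ (hdiffG n) hd
      rw [← hsplit] at hadd
      have hnn := hprob.2.1 _ (hdiffG n)
      have hAn : ν' (A n) = ν (A n) := hext _ (hAmem n)
      have := hbound n
      linarith [hadd, hnn, hAn ▸ this]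
    have hpos : 0 < ν' Z := hspos Z hZG ⟨z, hzZ⟩
    obtain ⟨n, hn⟩ := exists_pow_lt_of_lt_one hpos (by norm_num : (1 / 2 : ℝ) < 1)
    exact absurd (hle n) (not_le.2 hn)
end

section
/- Assume NMA⁻: for every set X there is a countably additive probability measure λ on the full power set of [X]^{<𝔠} such that λ({A ∈ [X]^{<𝔠} : x ∈ A}) = 1 for every x ∈ X. Then every Boolean algebra 𝔄, all of whose subalgebras of cardinality < 𝔠 carry strictly positive finitely additive probability measures, itself carries a strictly positive finitely additive probability measure. -/
open Cardinal

/-- `B` is a (Boolean) subalgebra of `A`. -/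
def IsSubBA {A : Type*} [BooleanAlgebra A] (B : Set A) : Prop :=
  ⊥ ∈ B ∧ ⊤ ∈ B ∧ (∀ a ∈ B, aᶜ ∈ B) ∧ ∀ a ∈ B, ∀ b ∈ B, a ⊔ b ∈ B

/-- `μ` is a finitely additive probability measure on the subalgebra `B`. -/
def FAProbOn {A : Type*} [BooleanAlgebra A] (B : Set A) (μ : A → ℝ) : Prop :=
  μ ⊤ = 1 ∧ (∀ a ∈ B, 0 ≤ μ a) ∧
    ∀ a ∈ B, ∀ b ∈ B, a ⊓ b = ⊥ → μ (a ⊔ b) = μ a + μ b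

/-- `μ` is strictly positive on `B`. -/
def SPOn {A : Type*} [BooleanAlgebra A] (B : Set A) (μ : A → ℝ) : Prop :=
  ∀ a ∈ B, a ≠ ⊥ → 0 < μ a

/-!
Choose for each `B ∈ [𝔄]^{<𝔠}` a strictly positive measure `ν_B` on the subalgebra generated by
`B`, which still has size `< 𝔠`, and average: `μ a = ∫ ν_B a dλ(B)`. Since `λ`-almost every `B`
contains any given `a`, `b`, the integrand is additive in `a` almost everywhere, so `μ` is finitely
additive; and it is positive on `a ≠ ⊥` because `ν_B a > 0` for almost every `B`.
-/

open MeasureTheory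

section OpClosure

variable {α : Type*} (f : α → α) (g : α → α → α) (s : Set α)

def opClosureStage : ℕ → Set α
  | 0 => s
  | n + 1 =>
    opClosureStage n ∪ f '' opClosureStage n ∪ Set.image2 g (opClosureStage n) (opClosureStage n)

def opClosure : Set α := ⋃ n, opClosureStage f g s n

lemma monotone_opClosureStage : Monotone (opClosureStage f g s) :=
  monotone_nat_of_le_succ fun _ _ ha => Or.inl (Or.inl ha)

lemma subset_opClosure : s ⊆ opClosure f g s :=
  fun _ ha => Set.mem_iUnion.2 ⟨0, ha⟩

variable {f g s}

lemma apply_mem_opClosure {a : α} (ha : a ∈ opClosure f g s) : f a ∈ opClosure f g s := by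
  obtain ⟨n, hn⟩ := Set.mem_iUnion.1 ha
  exact Set.mem_iUnion.2 ⟨n + 1, Or.inl (Or.inr ⟨a, hn, rfl⟩)⟩

lemma apply₂_mem_opClosure {a b : α} (ha : a ∈ opClosure f g s) (hb : b ∈ opClosure f g s) :
    g a b ∈ opClosure f g s := by
  obtain ⟨n, hn⟩ := Set.mem_iUnion.1 ha
  obtain ⟨m, hm⟩ := Set.mem_iUnion.1 hb
  have hmono := monotone_opClosureStage f g s
  exact Set.mem_iUnion.2 ⟨max n m + 1, Or.inr
    (Set.mem_image2_of_mem (hmono (le_max_left n m) hn) (hmono (le_max_right n m) hm))⟩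

variable (f g s)

lemma mk_opClosureStage_le (n : ℕ) : #(opClosureStage f g s n) ≤ #s + ℵ₀ := by
  induction n with
  | zero => exact le_self_add
  | succ n ih =>
    have hκ : ℵ₀ ≤ #s + ℵ₀ := le_add_self
    calc #(opClosureStage f g s (n + 1))
        ≤ (#(opClosureStage f g s n) + #(f '' opClosureStage f g s n)) +
            #(opClosureStage f g s n) * #(opClosureStage f g s n) :=
          (mk_union_le _ _).trans (add_le_add (mk_union_le _ _) mk_image2_le)
      _ ≤ ((#s + ℵ₀) + (#s + ℵ₀)) + (#s + ℵ₀) * (#s + ℵ₀) := by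
          gcongr
          exact mk_image_le.trans ih
      _ = #s + ℵ₀ := by rw [add_eq_self hκ, mul_eq_self hκ, add_eq_self hκ]

lemma mk_opClosure_le : #(opClosure f g s) ≤ #s + ℵ₀ := by
  have hunion := mk_iUnion_le_lift (opClosureStage f g s)
  simp only [lift_uzero, mk_nat, lift_aleph0] at hunion
  calc #(opClosure f g s) ≤ ℵ₀ * ⨆ n, #(opClosureStage f g s n) := hunion
    _ ≤ (#s + ℵ₀) * (#s + ℵ₀) := by
      gcongr
      · exact le_add_self
      · exact ciSup_le' (mk_opClosureStage_le f g s)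
    _ = #s + ℵ₀ := mul_eq_self le_add_self

end OpClosure

section GeneratedSubalgebra

variable {A : Type*} [BooleanAlgebra A]

def genBA (B : Set A) : Set A := opClosure compl (· ⊔ ·) (insert ⊥ (insert ⊤ B))

lemma subset_genBA (B : Set A) : B ⊆ genBA B :=
  fun _ ha => subset_opClosure _ _ _ (Set.mem_insert_of_mem _ (Set.mem_insert_of_mem _ ha))

lemma isSubBA_genBA (B : Set A) : IsSubBA (genBA B) :=
  ⟨subset_opClosure _ _ _ (Set.mem_insert _ _),
    subset_opClosure _ _ _ (Set.mem_insert_of_mem _ (Set.mem_insert _ _)),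
    fun _ ha => apply_mem_opClosure ha, fun _ ha _ hb => apply₂_mem_opClosure ha hb⟩

lemma mk_genBA_lt_continuum {B : Set A} (hB : #B < 𝔠) : #(genBA B) < 𝔠 := by
  have hone : (1 : Cardinal) < 𝔠 := one_lt_aleph0.trans aleph0_lt_continuum
  have hgen : #(insert ⊥ (insert ⊤ B) : Set A) < 𝔠 := by
    refine (mk_insert_le.trans (add_le_add_left mk_insert_le 1)).trans_lt ?_
    exact add_lt_of_lt aleph0_le_continuum (add_lt_of_lt aleph0_le_continuum hB hone) hone
  exact (mk_opClosure_le _ _ _).trans_lt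
    (add_lt_of_lt aleph0_le_continuum hgen aleph0_lt_continuum)

end GeneratedSubalgebra

namespace FAProbOn

variable {A : Type*} [BooleanAlgebra A] {B : Set A} {μ : A → ℝ}

lemma le_one (hB : IsSubBA B) (hμ : FAProbOn B μ) {a : A} (ha : a ∈ B) : μ a ≤ 1 := by
  have hac : aᶜ ∈ B := hB.2.2.1 a ha
  have hadd := hμ.2.2 a ha aᶜ hac inf_compl_eq_bot
  rw [sup_compl_eq_top, hμ.1] at hadd
  linarith [hμ.2.1 aᶜ hac]

lemma indicator_nonneg (hμ : FAProbOn B μ) (a : A) : 0 ≤ B.indicator μ a :=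
  Set.indicator_nonneg hμ.2.1 a

lemma indicator_le_one (hB : IsSubBA B) (hμ : FAProbOn B μ) (a : A) : B.indicator μ a ≤ 1 :=
  Set.indicator_apply_le' (hμ.le_one hB) fun _ => zero_le_one

end FAProbOn

section Mixture

variable {A Ω : Type*} [BooleanAlgebra A] [MeasurableSpace Ω] [DiscreteMeasurableSpace Ω]
  (lam : Measure Ω) (S : Ω → Set A) (ν : Ω → A → ℝ)

/-- Cutting `ν ω` off outside `S ω` makes the integrand bounded, hence integrable. -/
noncomputable def mixture (a : A) : ℝ := ∫ ω, (S ω).indicator (ν ω) a ∂lam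

variable [IsProbabilityMeasure lam] {S ν}

lemma integrable_indicator_of_faProbOn (hS : ∀ ω, IsSubBA (S ω))
    (hν : ∀ ω, FAProbOn (S ω) (ν ω)) (a : A) :
    Integrable (fun ω => (S ω).indicator (ν ω) a) lam := by
  refine .of_bound Measurable.of_discrete.aestronglyMeasurable 1 (.of_forall fun ω => ?_)
  rw [Real.norm_eq_abs, abs_of_nonneg ((hν ω).indicator_nonneg a)]
  exact (hν ω).indicator_le_one (hS ω) a

lemma faProbOn_mixture (hS : ∀ ω, IsSubBA (S ω)) (hν : ∀ ω, FAProbOn (S ω) (ν ω))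
    (hmem : ∀ a, ∀ᵐ ω ∂lam, a ∈ S ω) :
    FAProbOn Set.univ (mixture lam S ν) := by
  refine ⟨?_, fun a _ => integral_nonneg (fun ω => (hν ω).indicator_nonneg a), ?_⟩
  · have htop : ∀ ω, (S ω).indicator (ν ω) ⊤ = 1 :=
      fun ω => (Set.indicator_of_mem (hS ω).2.1 _).trans (hν ω).1
    simp [mixture, htop]
  · intro a _ b _ hab
    have hadd : (fun ω => (S ω).indicator (ν ω) (a ⊔ b)) =ᵐ[lam]
        fun ω => (S ω).indicator (ν ω) a + (S ω).indicator (ν ω) b := by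
      filter_upwards [hmem a, hmem b] with ω ha hb
      rw [Set.indicator_of_mem ((hS ω).2.2.2 a ha b hb), Set.indicator_of_mem ha,
        Set.indicator_of_mem hb]
      exact (hν ω).2.2 a ha b hb hab
    rw [mixture, integral_congr_ae hadd, integral_add
      (integrable_indicator_of_faProbOn lam hS hν a) (integrable_indicator_of_faProbOn lam hS hν b)]
    rfl

lemma spOn_mixture (hS : ∀ ω, IsSubBA (S ω)) (hν : ∀ ω, FAProbOn (S ω) (ν ω))
    (hsp : ∀ ω, SPOn (S ω) (ν ω)) (hmem : ∀ a, ∀ᵐ ω ∂lam, a ∈ S ω) :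
    SPOn Set.univ (mixture lam S ν) := by
  intro a _ ha
  have hpos : ∀ᵐ ω ∂lam, ω ∈ Function.support fun ω => (S ω).indicator (ν ω) a := by
    filter_upwards [hmem a] with ω haω
    rw [Function.mem_support, Set.indicator_of_mem haω]
    exact (hsp ω a haω ha).ne'
  rw [mixture, integral_pos_iff_support_of_nonneg (fun ω => (hν ω).indicator_nonneg a)
    (integrable_indicator_of_faProbOn lam hS hν a),
    (ae_mem_iff_measure_eq MeasurableSet.of_discrete.nullMeasurableSet).1 hpos]
  simp

end Mixture

theorem stmt_11_general
    (hNMA : ∀ X : Type, ∃ lam : @MeasureTheory.Measure {A : Set X // #A < continuum} ⊤,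
      lam Set.univ = 1 ∧ ∀ x : X, lam {A | x ∈ A.1} = 1)
    (A : Type) [BooleanAlgebra A]
    (h : ∀ B : Set A, IsSubBA B → #B < continuum →
      ∃ μ : A → ℝ, FAProbOn B μ ∧ SPOn B μ) :
    ∃ μ : A → ℝ, FAProbOn (Set.univ : Set A) μ ∧ SPOn (Set.univ : Set A) μ := by
  let _ : MeasurableSpace {S : Set A // #S < continuum} := ⊤
  obtain ⟨lam, hlam_univ, hlam_mem⟩ := hNMA A
  have : IsProbabilityMeasure lam := ⟨hlam_univ⟩
  choose ν hν hsp using fun B : {S : Set A // #S < continuum} =>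
    h (genBA B.1) (isSubBA_genBA B.1) (mk_genBA_lt_continuum B.2)
  have hmem : ∀ a, ∀ᵐ B ∂lam, a ∈ genBA B.1 := fun a =>
    ((ae_iff_prob_eq_one Measurable.of_discrete).2 (hlam_mem a)).mono
      fun B haB => subset_genBA B.1 haB
  exact ⟨mixture lam (fun B => genBA B.1) ν,
    faProbOn_mixture lam (fun B => isSubBA_genBA B.1) hν hmem,
    spOn_mixture lam (fun B => isSubBA_genBA B.1) hν hsp hmem⟩

/-- Assuming NMA⁻ (for every set `X` there is a countably additive probability measure
on the power set of `[X]^{<𝔠}` giving measure one to `{A : x ∈ A}` for each `x ∈ X`),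
every Boolean algebra all of whose subalgebras of size `< 𝔠` carry strictly positive
finitely additive probability measures carries one itself. -/
theorem stmt_11
    (hNMA : ∀ X : Type, ∃ lam : @MeasureTheory.Measure {A : Set X // #A < continuum} ⊤,
      lam Set.univ = 1 ∧ ∀ x : X, lam {A | x ∈ A.1} = 1)
    (A : Type) [BooleanAlgebra A] [Nontrivial A]
    (h : ∀ B : Set A, IsSubBA B → #B < continuum →
      ∃ μ : A → ℝ, FAProbOn B μ ∧ SPOn B μ) :
    ∃ μ : A → ℝ, FAProbOn (Set.univ : Set A) μ ∧ SPOn (Set.univ : Set A) μ :=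
  stmt_11_general hNMA A h
end

section
/- (Kelley, easy direction) If a Boolean algebra 𝔄 carries a strictly positive finitely additive probability measure μ, then 𝔄⁺ = 𝔄 \ {0} decomposes as a countable union ⋃_n ℰ_n where each ℰ_n = {a : μ(a) ≥ 1/n} has intersection number at least 1/n; in particular, for any a₁, …, a_m ∈ ℰ_n there is a subsequence of length ≥ m/n with nonzero meet. -/
open Finset

section Aux

variable {A : Type*} [BooleanAlgebra A] (μ : A → ℝ)

/-- Finite additivity gives `μ ⊥ = 0`. -/
lemma kelley_mu_bot (hadd : ∀ a b : A, a ⊓ b = ⊥ → μ (a ⊔ b) = μ a + μ b) :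
    μ ⊥ = 0 := by
  have h := hadd ⊥ ⊥ (by simp)
  simp at h
  linarith

/-- Finite additivity for pairwise disjoint finite families. -/
lemma kelley_mu_sup {ι : Type*} (hadd : ∀ a b : A, a ⊓ b = ⊥ → μ (a ⊔ b) = μ a + μ b)
    (s : Finset ι) (g : ι → A)
    (hdisj : ∀ i ∈ s, ∀ j ∈ s, i ≠ j → g i ⊓ g j = ⊥) :
    μ (s.sup g) = ∑ i ∈ s, μ (g i) := by
  classical
  induction s using Finset.induction with
  | empty => simpa using kelley_mu_bot μ hadd
  | @insert j s hj ih =>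
    rw [Finset.sup_insert, Finset.sum_insert hj]
    have hd : g j ⊓ s.sup g = ⊥ := by
      rw [Finset.sup_inf_distrib_left, Finset.sup_eq_bot_iff]
      intro i hi
      exact hdisj j (mem_insert_self j s) i (mem_insert_of_mem hi)
        (by rintro rfl; exact hj hi)
    rw [hadd _ _ hd, ih (fun i hi k hk hik =>
      hdisj i (mem_insert_of_mem hi) k (mem_insert_of_mem hk) hik)]

/-- In a Boolean algebra, the "atoms" of a finite family cover the whole algebra. -/
lemma kelley_sup_atoms {ι : Type*} [Fintype ι] [DecidableEq ι] (f : ι → A)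
    (u : Finset ι) :
    (⊤ : A) ≤ (Finset.univ : Finset (ι → Bool)).sup
      (fun t => u.inf (fun i => cond (t i) (f i) (f i)ᶜ)) := by
  classical
  induction u using Finset.induction with
  | empty =>
    have : (fun _ : ι => true) ∈ (Finset.univ : Finset (ι → Bool)) := mem_univ _
    simpa using Finset.le_sup (f := fun t : ι → Bool =>
      (∅ : Finset ι).inf (fun i => cond (t i) (f i) (f i)ᶜ)) this
  | @insert j u hj ih =>
    have key : ∀ (t : ι → Bool) (b : Bool),
        cond b (f j) (f j)ᶜ ⊓ u.inf (fun i => cond (t i) (f i) (f i)ᶜ) ≤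
        (Finset.univ : Finset (ι → Bool)).sup
          (fun t => (insert j u).inf (fun i => cond (t i) (f i) (f i)ᶜ)) := by
      intro t b
      have hagree : u.inf (fun i => cond (Function.update t j b i) (f i) (f i)ᶜ)
          = u.inf (fun i => cond (t i) (f i) (f i)ᶜ) := by
        apply Finset.inf_congr rfl
        intro i hi
        rw [Function.update_of_ne (by rintro rfl; exact hj hi)]
      calc cond b (f j) (f j)ᶜ ⊓ u.inf (fun i => cond (t i) (f i) (f i)ᶜ)
          = (insert j u).inf (fun i => cond (Function.update t j b i) (f i) (f i)ᶜ) := by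
            rw [Finset.inf_insert, Function.update_self, hagree]
        _ ≤ _ := Finset.le_sup (f := fun t : ι → Bool =>
            (insert j u).inf fun i => cond (t i) (f i) (f i)ᶜ) (mem_univ _)
    calc (⊤ : A) = (f j ⊔ (f j)ᶜ) ⊓ ⊤ := by simp
      _ ≤ (f j ⊔ (f j)ᶜ) ⊓ (Finset.univ : Finset (ι → Bool)).sup
          (fun t => u.inf (fun i => cond (t i) (f i) (f i)ᶜ)) :=
        inf_le_inf_left _ ih
      _ = (Finset.univ : Finset (ι → Bool)).sup
          (fun t => (f j ⊔ (f j)ᶜ) ⊓ u.inf (fun i => cond (t i) (f i) (f i)ᶜ)) :=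
        Finset.sup_inf_distrib_left _ _ _
      _ ≤ (Finset.univ : Finset (ι → Bool)).sup
          (fun t => (insert j u).inf (fun i => cond (t i) (f i) (f i)ᶜ)) := by
        apply Finset.sup_le
        intro t _
        rw [inf_sup_right]
        exact sup_le (key t true) (key t false)

end Aux

/-- (Kelley, easy direction) If `μ` is a strictly positive finitely additive
probability measure on a Boolean algebra `𝔄`, then `𝔄⁺` is covered by the sets
`ℰ_n = {a : μ(a) ≥ 1/n}` and each `ℰ_n` has intersection number at least `1/n`:
any `a₁, …, a_m ∈ ℰ_n` admit a subsequence of length `≥ m/n` with nonzero meet. -/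
theorem stmt_19 {A : Type*} [BooleanAlgebra A] (μ : A → ℝ)
    (hone : μ ⊤ = 1) (hpos : ∀ a, 0 ≤ μ a)
    (hadd : ∀ a b : A, a ⊓ b = ⊥ → μ (a ⊔ b) = μ a + μ b)
    (hsp : ∀ a : A, a ≠ ⊥ → 0 < μ a) :
    (∀ a : A, a ≠ ⊥ → ∃ n : ℕ, 0 < n ∧ 1 / (n : ℝ) ≤ μ a) ∧
    ∀ n : ℕ, 0 < n → ∀ m : ℕ, ∀ f : Fin m → A,
      (∀ i, f i ≠ ⊥ ∧ 1 / (n : ℝ) ≤ μ (f i)) →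
      ∃ s : Finset (Fin m), (m : ℝ) / n ≤ s.card ∧ s.inf f ≠ ⊥ := by
  classical
  have hbot : μ ⊥ = 0 := kelley_mu_bot μ hadd
  constructor
  · intro a ha
    obtain ⟨k, hk⟩ := exists_nat_one_div_lt (hsp a ha)
    exact ⟨k + 1, Nat.succ_pos k, by push_cast at hk ⊢; linarith⟩
  · intro n hn m f hf
    -- the atoms of the family `f`
    set g : (Fin m → Bool) → A :=
      fun t => Finset.univ.inf (fun i => cond (t i) (f i) (f i)ᶜ) with hg
    have hdisj : ∀ t ∈ (Finset.univ : Finset (Fin m → Bool)),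
        ∀ t' ∈ (Finset.univ : Finset (Fin m → Bool)), t ≠ t' → g t ⊓ g t' = ⊥ := by
      intro t _ t' _ htt'
      obtain ⟨i, hi⟩ : ∃ i, t i ≠ t' i := by
        by_contra h
        push_neg at h
        exact htt' (funext h)
      have h1 : g t ≤ cond (t i) (f i) (f i)ᶜ := Finset.inf_le (mem_univ i)
      have h2 : g t' ≤ cond (t' i) (f i) (f i)ᶜ := Finset.inf_le (mem_univ i)
      apply le_bot_iff.1
      calc g t ⊓ g t' ≤ cond (t i) (f i) (f i)ᶜ ⊓ cond (t' i) (f i) (f i)ᶜ :=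
            inf_le_inf h1 h2
        _ ≤ ⊥ := by
            rcases Bool.eq_false_or_eq_true (t i) with h | h <;>
              rcases Bool.eq_false_or_eq_true (t' i) with h' | h' <;>
              simp [h, h'] at hi ⊢
    have hsupg : (Finset.univ : Finset (Fin m → Bool)).sup g = ⊤ :=
      le_antisymm le_top (kelley_sup_atoms f Finset.univ)
    -- total mass of the atoms is 1
    have hsum1 : ∑ t : Fin m → Bool, μ (g t) = 1 := by
      rw [← kelley_mu_sup μ hadd _ g hdisj, hsupg, hone]
    -- each `f i` decomposes along the atoms
    have hmufi : ∀ i, μ (f i) = ∑ t : Fin m → Bool, if t i then μ (g t) else 0 := by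
      intro i
      have hfi : f i = (Finset.univ : Finset (Fin m → Bool)).sup (fun t => f i ⊓ g t) := by
        rw [← Finset.sup_inf_distrib_left, hsupg, inf_top_eq]
      have hdisj' : ∀ t ∈ (Finset.univ : Finset (Fin m → Bool)),
          ∀ t' ∈ (Finset.univ : Finset (Fin m → Bool)), t ≠ t' →
          (f i ⊓ g t) ⊓ (f i ⊓ g t') = ⊥ := by
        intro t ht t' ht' htt'
        apply le_bot_iff.1
        calc (f i ⊓ g t) ⊓ (f i ⊓ g t') ≤ g t ⊓ g t' := inf_le_inf inf_le_right inf_le_right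
          _ = ⊥ := hdisj t ht t' ht' htt'
      rw [hfi, kelley_mu_sup μ hadd _ _ hdisj']
      apply Finset.sum_congr rfl
      intro t _
      by_cases h : t i = true
      · have hle : g t ≤ f i := by
          have h2 := Finset.inf_le (f := fun j => cond (t j) (f j) (f j)ᶜ) (mem_univ i)
          simpa [h] using h2
        simp [h, inf_eq_right.2 hle]
      · have h' : t i = false := by simpa using h
        have hle : g t ≤ (f i)ᶜ := by
          have h2 := Finset.inf_le (f := fun j => cond (t j) (f j) (f j)ᶜ) (mem_univ i)
          simpa [h'] using h2
        have hb : f i ⊓ g t = ⊥ := by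
          apply le_bot_iff.1
          calc f i ⊓ g t ≤ f i ⊓ (f i)ᶜ := inf_le_inf_left _ hle
            _ = ⊥ := inf_compl_eq_bot
        simp [h', hb, hbot]
    -- the weighted counting identity
    have hcount : ∑ i, μ (f i) =
        ∑ t : Fin m → Bool, ((Finset.univ.filter (fun i => t i = true)).card : ℝ) * μ (g t) := by
      rw [Finset.sum_congr rfl (fun i _ => hmufi i), Finset.sum_comm]
      apply Finset.sum_congr rfl
      intro t _
      rw [Finset.sum_ite, Finset.sum_const_zero, add_zero, Finset.sum_const,
        nsmul_eq_mul, mul_comm]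
    have hlow : (m : ℝ) / n ≤ ∑ i, μ (f i) := by
      have : (m : ℝ) / n = ∑ _i : Fin m, 1 / (n : ℝ) := by
        rw [Finset.sum_const, card_univ, Fintype.card_fin, nsmul_eq_mul]
        ring
      rw [this]
      exact Finset.sum_le_sum (fun i _ => (hf i).2)
    -- pick an atom with positive measure maximizing the count
    have hnonempty : (Finset.univ.filter (fun t : Fin m → Bool => g t ≠ ⊥)).Nonempty := by
      by_contra h
      rw [Finset.not_nonempty_iff_eq_empty, Finset.filter_eq_empty_iff] at h
      have : ∑ t : Fin m → Bool, μ (g t) = 0 := by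
        apply Finset.sum_eq_zero
        intro t ht
        have := h ht
        simp only [ne_eq, not_not] at this
        rw [this, hbot]
      rw [hsum1] at this
      norm_num at this
    obtain ⟨t₀, ht₀mem, ht₀max⟩ := Finset.exists_max_image _
      (fun t : Fin m → Bool => (Finset.univ.filter (fun i => t i = true)).card) hnonempty
    have ht₀ : g t₀ ≠ ⊥ := (Finset.mem_filter.1 ht₀mem).2
    set c : ℝ := ((Finset.univ.filter (fun i => t₀ i = true)).card : ℝ) with hc
    -- the weighted sum is at most c
    have hup : ∑ t : Fin m → Bool,
        ((Finset.univ.filter (fun i => t i = true)).card : ℝ) * μ (g t) ≤ c := by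
      have hle : ∀ t : Fin m → Bool,
          ((Finset.univ.filter (fun i => t i = true)).card : ℝ) * μ (g t) ≤ c * μ (g t) := by
        intro t
        by_cases hgt : g t = ⊥
        · simp [hgt, hbot]
        · apply mul_le_mul_of_nonneg_right _ (hpos _)
          rw [hc]
          exact_mod_cast ht₀max t (Finset.mem_filter.2 ⟨mem_univ _, hgt⟩)
      calc ∑ t : Fin m → Bool,
            ((Finset.univ.filter (fun i => t i = true)).card : ℝ) * μ (g t)
          ≤ ∑ t : Fin m → Bool, c * μ (g t) := Finset.sum_le_sum (fun t _ => hle t)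
        _ = c * ∑ t : Fin m → Bool, μ (g t) := by rw [Finset.mul_sum]
        _ = c := by rw [hsum1, mul_one]
    refine ⟨Finset.univ.filter (fun i => t₀ i = true), ?_, ?_⟩
    · calc (m : ℝ) / n ≤ ∑ i, μ (f i) := hlow
        _ ≤ c := by rw [hcount] at *; exact hup
        _ = _ := rfl
    · intro habs
      apply ht₀
      apply le_bot_iff.1
      rw [← habs]
      apply Finset.le_inf
      intro i hi
      have hti : t₀ i = true := (Finset.mem_filter.1 hi).2
      have h2 := Finset.inf_le (f := fun j => cond (t₀ j) (f j) (f j)ᶜ) (mem_univ i)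
      simpa [hti] using h2
end
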